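/- For every TUX game w on N, every coalition S ⊆ N, and every embedded coalition (R,ρ) of N\S, the restriction satisfies w_{−S}(R,ρ) = ∑_{τ ∈ Π(N\R) : τ_{−S} = ρ} ( p*_{N\R}(τ) / p*_{(N\S)\R}(ρ) ) · w(R,τ). -/

import Mathlib

open Finset BigOperators

namespace TUX

/-- A (raw) game in partition function form: assigns a real worth to each
coalition together with a partition (of the outside players). -/
abbrev Game := Finset ℕ → Finset (Finset ℕ) → ℝ

/-- A TU game (characteristic function). -/
abbrev TUGame := Finset ℕ → ℝ

/-- A solution for TUX games: given a player set and a game, assigns payoffs. -/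
abbrev Sol := Finset ℕ → Game → ℕ → ℝ

/-- `w` is a genuine TUX game: the empty coalition has worth 0. -/
def IsTUX (w : Game) : Prop := ∀ π, w ∅ π = 0

/-- `π` is a partition of the finite set `M`. -/
def IsPartition (M : Finset ℕ) (π : Finset (Finset ℕ)) : Prop :=
  (∀ B ∈ π, B ⊆ M) ∧ ∅ ∉ π ∧ ∀ x ∈ M, (π.filter (fun B => x ∈ B)).card = 1

instance (M : Finset ℕ) : DecidablePred (IsPartition M) := fun π => by
  unfold IsPartition; infer_instance

/-- The finite set of all partitions of `M`. -/
def partitionsOf (M : Finset ℕ) : Finset (Finset (Finset ℕ)) :=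
  (M.powerset.powerset).filter (IsPartition M)

/-- The Ewens(θ = 1) probability of the partition `π` of `M`:
`p*_M(π) = ∏_{B ∈ π} (|B| - 1)! / |M|!`. -/
noncomputable def pstar (M : Finset ℕ) (π : Finset (Finset ℕ)) : ℝ :=
  (∏ B ∈ π, ((B.card - 1).factorial : ℝ)) / (M.card.factorial : ℝ)

/-- The block of `π` containing `j` (junk if `π` is not a partition containing `j`). -/
def blockOf (π : Finset (Finset ℕ)) (j : ℕ) : Finset ℕ :=
  (π.filter (fun B => j ∈ B)).sup id

/-- Add player `i` to the block `B` of `π`. -/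
def addToBlock (π : Finset (Finset ℕ)) (i : ℕ) (B : Finset ℕ) : Finset (Finset ℕ) :=
  insert (insert i B) (π.erase B)

/-- The restriction operator `r⋆` removing a single player `i` from a game on `N`:
`w₋ᵢ(S,π) = (1/(n-s)) (w(S, π₊ᵢ⇝∅) + ∑_{j ∈ N∖(S∪{i})} w(S, π₊ᵢ⇝π(j)))`. -/
noncomputable def restrict1 (N : Finset ℕ) (w : Game) (i : ℕ) : Game :=
  fun S π =>
    ((N.card : ℝ) - (S.card : ℝ))⁻¹ *
      (w S (insert {i} π) + ∑ j ∈ (N \ S).erase i, w S (addToBlock π i (blockOf π j)))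

/-- Iterated removal of a list of players. -/
noncomputable def restrictL : Finset ℕ → Game → List ℕ → Game
  | _, w, [] => w
  | N, w, i :: l => restrictL (N.erase i) (restrict1 N w i) l

/-- Removal of a set of players (via the increasing enumeration; by path
independence of `r⋆` the order is immaterial). -/
noncomputable def restrictSet (N : Finset ℕ) (w : Game) (T : Finset ℕ) : Game :=
  restrictL N w (T.sort (· ≤ ·))

/-- The average TU game `v̄_w` of a TUX game `w` on `N`. -/
noncomputable def avg (N : Finset ℕ) (w : Game) : TUGame :=
  fun S => ∑ π ∈ partitionsOf (N \ S), pstar (N \ S) π * w S π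

/-- The auxiliary TU game `v*_w(S) = w₋(N∖S)(S,∅)`. -/
noncomputable def auxGame (N : Finset ℕ) (w : Game) : TUGame :=
  fun S => restrictSet N w (N \ S) S ∅

/-- The Shapley value of a TU game on player set `N`. -/
noncomputable def shapley (N : Finset ℕ) (v : TUGame) (i : ℕ) : ℝ :=
  ∑ S ∈ (N.erase i).powerset,
    (((S.card.factorial : ℝ) * ((N.card - S.card - 1).factorial : ℝ)) / (N.card.factorial : ℝ)) *
      (v (insert i S) - v S)

/-- The MPW solution: the Shapley value of the average game. -/
noncomputable def MPW (N : Finset ℕ) (w : Game) (i : ℕ) : ℝ := shapley N (avg N w) i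

/-- The MPW solution as a solution for TUX games. -/
noncomputable def MPWsol : Sol := fun N w i => MPW N w i

/-- The scaled Dirac TUX game `δ_{T,τ}` on `N`. -/
noncomputable def scaledDirac (N T : Finset ℕ) (τ : Finset (Finset ℕ)) : Game :=
  fun S π => if S = T ∧ π = τ then (pstar (N \ T) τ)⁻¹ else 0

/-- `τ₋S`: remove the players of `S` from each block of `τ`, discarding empty blocks. -/
def partRemove (τ : Finset (Finset ℕ)) (S : Finset ℕ) : Finset (Finset ℕ) :=
  (τ.image (fun B => B \ S)).erase ∅

/-- The Sobolev-reduced TUX game `w₋ⱼ^{So,φ}` on `N ∖ {j}`. -/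
noncomputable def sobRed (N : Finset ℕ) (φ : Sol) (w : Game) (j : ℕ) : Game :=
  fun S π =>
    ((S.card : ℝ) / ((N.card : ℝ) - 1)) * (w (insert j S) π - φ N w j) +
      (1 - (S.card : ℝ) / ((N.card : ℝ) - 1)) * restrict1 N w j S π

/-- The Hart–Mas-Colell reduced TUX game `w₋T^{HM,φ}` on `N ∖ T`. -/
noncomputable def hmRed (N : Finset ℕ) (φ : Sol) (w : Game) (T : Finset ℕ) : Game :=
  fun S π => w (S ∪ T) π - ∑ j ∈ T, φ (S ∪ T) (restrictSet N w (N \ (S ∪ T))) j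

/-- Efficiency for TUX games. -/
def EfficientX (φ : Sol) : Prop :=
  ∀ (N : Finset ℕ) (w : Game), IsTUX w → ∑ i ∈ N, φ N w i = w N ∅

/-- Balanced contributions for TUX games (w.r.t. the restriction operator `r⋆`). -/
def BalancedContributionsX (φ : Sol) : Prop :=
  ∀ (N : Finset ℕ) (w : Game), IsTUX w → ∀ i ∈ N, ∀ j ∈ N,
    φ N w i - φ (N.erase j) (restrict1 N w j) i
      = φ N w j - φ (N.erase i) (restrict1 N w i) j

/-- 2-standardness for TUX games. -/
def TwoStandardX (φ : Sol) : Prop :=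
  ∀ i j : ℕ, i ≠ j → ∀ w : Game, IsTUX w →
    φ {i, j} w i
      = w {i} {({j} : Finset ℕ)}
        + (w {i, j} ∅ - w {j} {({i} : Finset ℕ)} - w {i} {({j} : Finset ℕ)}) / 2

/-- Sobolev consistency for TUX games. -/
def SobolevConsistentX (φ : Sol) : Prop :=
  ∀ (N : Finset ℕ) (w : Game), IsTUX w → ∀ i ∈ N, ∀ j ∈ N, i ≠ j →
    φ N w i = φ (N.erase j) (sobRed N φ w j) i

/-- Hart–Mas-Colell consistency (single-player removal) for TUX games. -/
def HMConsistentX (φ : Sol) : Prop :=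
  ∀ (N : Finset ℕ) (w : Game), IsTUX w → ∀ i ∈ N, ∀ j ∈ N, i ≠ j →
    φ N w i = φ (N.erase j) (hmRed N φ w {j}) i

/-- Set Hart–Mas-Colell consistency (removal of a coalition) for TUX games. -/
def SetHMConsistentX (φ : Sol) : Prop :=
  ∀ (N : Finset ℕ) (w : Game), IsTUX w → ∀ i ∈ N, ∀ T ⊆ N.erase i,
    φ N w i = φ (N \ T) (hmRed N φ w T) i

/-- The finite set of embedded coalitions `(T,τ)` of `N` with `T ≠ ∅`. -/
def embeddedNE (N : Finset ℕ) : Finset (Finset ℕ × Finset (Finset ℕ)) :=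
  (N.powerset ×ˢ N.powerset.powerset).filter
    (fun p => p.1.Nonempty ∧ IsPartition (N \ p.1) p.2)

section Helpers

variable {M N R : Finset ℕ} {π ρ τ : Finset (Finset ℕ)}

lemma mem_partitionsOf : π ∈ partitionsOf M ↔ IsPartition M π := by
  unfold partitionsOf
  simp only [mem_filter, mem_powerset, and_iff_right_iff_imp]
  intro h
  exact fun B hB => Finset.mem_powerset.mpr (h.1 B hB)

lemma card_filter_one {α : Type*} {s : Finset α} {p : α → Prop} [DecidablePred p] {a : α}
    (ha : a ∈ s) (hpa : p a) (hu : ∀ b ∈ s, p b → b = a) : (s.filter p).card = 1 := by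
  rw [Finset.card_eq_one]
  refine ⟨a, ?_⟩
  ext b
  simp only [mem_filter, mem_singleton]
  constructor
  · rintro ⟨hb, hpb⟩; exact hu b hb hpb
  · rintro rfl; exact ⟨ha, hpa⟩

lemma blocks_eq (h : IsPartition M π) {B B' : Finset ℕ} {x : ℕ}
    (hB : B ∈ π) (hB' : B' ∈ π) (hx : x ∈ B) (hx' : x ∈ B') : B = B' := by
  have hxM : x ∈ M := h.1 B hB hx
  obtain ⟨C, hC⟩ := Finset.card_eq_one.mp (h.2.2 x hxM)
  have h1 : B ∈ π.filter (fun B => x ∈ B) := mem_filter.mpr ⟨hB, hx⟩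
  have h2 : B' ∈ π.filter (fun B => x ∈ B) := mem_filter.mpr ⟨hB', hx'⟩
  rw [hC, mem_singleton] at h1 h2
  rw [h1, h2]

lemma blockOf_spec (h : IsPartition M π) {x : ℕ} (hx : x ∈ M) :
    blockOf π x ∈ π ∧ x ∈ blockOf π x := by
  obtain ⟨C, hC⟩ := Finset.card_eq_one.mp (h.2.2 x hx)
  have hCm : C ∈ π.filter (fun B => x ∈ B) := hC ▸ mem_singleton_self C
  have hb : blockOf π x = C := by rw [blockOf, hC]; simp
  rw [hb]
  exact ⟨(mem_filter.mp hCm).1, (mem_filter.mp hCm).2⟩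

lemma biUnion_eq (h : IsPartition M π) : π.biUnion id = M := by
  ext x
  simp only [mem_biUnion, id]
  constructor
  · rintro ⟨B, hB, hx⟩; exact h.1 B hB hx
  · intro hx; exact ⟨_, (blockOf_spec h hx).1, (blockOf_spec h hx).2⟩

lemma isPartition_partRemove (h : IsPartition M τ) (S : Finset ℕ) :
    IsPartition (M \ S) (partRemove τ S) := by
  refine ⟨?_, ?_, ?_⟩
  · intro B hB
    rw [partRemove, mem_erase, mem_image] at hB
    obtain ⟨hne, C, hC, rfl⟩ := hB
    exact sdiff_subset_sdiff (h.1 C hC) le_rfl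
  · simp [partRemove]
  · intro x hx
    rw [mem_sdiff] at hx
    have hbx := blockOf_spec h hx.1
    refine card_filter_one (a := blockOf τ x \ S) ?_ ?_ ?_
    · rw [partRemove, mem_erase, mem_image]
      refine ⟨?_, blockOf τ x, hbx.1, rfl⟩
      exact Finset.ne_empty_of_mem (Finset.mem_sdiff.mpr ⟨hbx.2, hx.2⟩)
    · exact Finset.mem_sdiff.mpr ⟨hbx.2, hx.2⟩
    · intro b hb hxb
      rw [partRemove, mem_erase, mem_image] at hb
      obtain ⟨hne, C, hC, rfl⟩ := hb
      have : C = blockOf τ x :=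
        blocks_eq h hC hbx.1 (Finset.mem_sdiff.mp hxb).1 hbx.2
      rw [this]

lemma partRemove_partRemove (τ : Finset (Finset ℕ)) (S T : Finset ℕ) :
    partRemove (partRemove τ S) T = partRemove τ (S ∪ T) := by
  unfold partRemove
  ext B
  simp only [mem_erase, mem_image]
  have key : ∀ D : Finset ℕ, (D \ S) \ T = D \ (S ∪ T) := by
    intro D; ext x; simp only [mem_sdiff, mem_union]; tauto
  constructor
  · rintro ⟨hBne, C, ⟨hCne, D, hD, rfl⟩, rfl⟩
    exact ⟨hBne, D, hD, (key D).symm⟩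
  · rintro ⟨hBne, D, hD, rfl⟩
    refine ⟨hBne, D \ S, ⟨?_, D, hD, rfl⟩, key D⟩
    intro hDS
    apply hBne
    rw [← key D, hDS]
    simp

lemma partRemove_empty (h : ∅ ∉ τ) : partRemove τ ∅ = τ := by
  rw [partRemove]
  have himg : τ.image (fun B => B \ ∅) = τ := by
    calc τ.image (fun B => B \ ∅) = τ.image id :=
        Finset.image_congr (fun B _ => by simp)
      _ = τ := Finset.image_id
  rw [himg, Finset.erase_eq_of_notMem h]

lemma pstar_pos (M : Finset ℕ) (π : Finset (Finset ℕ)) : 0 < pstar M π := by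
  apply div_pos
  · exact Finset.prod_pos fun B _ => by exact_mod_cast Nat.factorial_pos _
  · exact_mod_cast Nat.factorial_pos _

end Helpers

lemma restrict1_formula (N : Finset ℕ) (w : Game) (i : ℕ) (hi : i ∈ N)
    (R : Finset ℕ) (hR : R ⊆ N) (hiR : i ∉ R)
    (ρ : Finset (Finset ℕ)) (hρ : IsPartition ((N.erase i) \ R) ρ) :
    restrict1 N w i R ρ
      = ∑ τ ∈ (partitionsOf (N \ R)).filter (fun τ => partRemove τ {i} = ρ),
          (pstar (N \ R) τ / pstar ((N.erase i) \ R) ρ) * w R τ := by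
  classical
  have hiNR : i ∈ N \ R := mem_sdiff.mpr ⟨hi, hiR⟩
  have hE : (N \ R).erase i = (N.erase i) \ R := by
    ext x; simp only [mem_erase, mem_sdiff]; tauto
  have hblock : ∀ B ∈ ρ, i ∉ B ∧ B.Nonempty ∧ B ⊆ (N.erase i) \ R := by
    intro B hB
    have hsub := hρ.1 B hB
    refine ⟨fun hiB => ?_, Finset.nonempty_iff_ne_empty.mpr (fun h => hρ.2.1 (h ▸ hB)), hsub⟩
    exact (Finset.mem_erase.mp (Finset.mem_sdiff.mp (hsub hiB)).1).1 rfl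
  have hsing : ({i} : Finset ℕ) ∉ ρ := fun h => (hblock _ h).1 (mem_singleton_self i)
  have himg : ∀ s : Finset (Finset ℕ), (∀ B ∈ s, i ∉ B) →
      s.image (fun B => B \ {i}) = s := by
    intro s hs
    have heq : ∀ B ∈ s, B \ {i} = B := by
      intro B hB
      ext x
      simp only [mem_sdiff, mem_singleton]
      exact ⟨fun h => h.1, fun h => ⟨h, fun e => hs B hB (e ▸ h)⟩⟩
    calc s.image (fun B => B \ {i}) = s.image id := Finset.image_congr heq
      _ = s := Finset.image_id
  have h1 : partRemove (insert {i} ρ) {i} = ρ := by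
    rw [partRemove, Finset.image_insert, sdiff_self,
      himg _ (fun B hB => (hblock B hB).1), Finset.bot_eq_empty, Finset.erase_insert_eq_erase,
      Finset.erase_eq_of_notMem hρ.2.1]
  have h2 : ∀ B ∈ ρ, partRemove (addToBlock ρ i B) {i} = ρ := by
    intro B hB
    obtain ⟨hiB, hBne, _⟩ := hblock B hB
    have hins : insert i B \ {i} = B := by
      ext x
      simp only [mem_sdiff, mem_insert, mem_singleton]
      constructor
      · rintro ⟨rfl | h, hxi⟩
        · exact absurd rfl hxi
        · exact h
      · intro h; exact ⟨Or.inr h, fun e => hiB (e ▸ h)⟩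
    rw [addToBlock, partRemove, Finset.image_insert, hins,
      himg _ (fun C hC => (hblock C (Finset.mem_of_mem_erase hC)).1),
      Finset.insert_erase hB, Finset.erase_eq_of_notMem hρ.2.1]
  have hsub' : (N.erase i) \ R ⊆ N \ R := by
    intro x hx; rw [mem_sdiff] at hx ⊢
    exact ⟨Finset.mem_of_mem_erase hx.1, hx.2⟩
  have hp1 : IsPartition (N \ R) (insert {i} ρ) := by
    refine ⟨?_, ?_, ?_⟩
    · intro B hB
      rcases mem_insert.mp hB with rfl | hB
      · exact Finset.singleton_subset_iff.mpr hiNR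
      · exact (hblock B hB).2.2.trans hsub'
    · intro h
      rcases mem_insert.mp h with h | h
      · exact absurd h.symm (Finset.singleton_ne_empty i)
      · exact hρ.2.1 h
    · intro x hx
      by_cases hxi : x = i
      · subst hxi
        refine card_filter_one (mem_insert_self _ _) (mem_singleton_self x) ?_
        intro b hb hib
        rcases mem_insert.mp hb with rfl | hb
        · rfl
        · exact absurd hib (hblock b hb).1
      · have hx' : x ∈ (N.erase i) \ R := by
          rw [mem_sdiff] at hx ⊢
          exact ⟨Finset.mem_erase.mpr ⟨hxi, hx.1⟩, hx.2⟩
        obtain ⟨hb1, hb2⟩ := blockOf_spec hρ hx'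
        refine card_filter_one (mem_insert_of_mem hb1) hb2 ?_
        intro b hb hxb
        rcases mem_insert.mp hb with rfl | hb
        · exact absurd (mem_singleton.mp hxb) hxi
        · exact blocks_eq hρ hb hb1 hxb hb2
  have hp2 : ∀ B ∈ ρ, IsPartition (N \ R) (addToBlock ρ i B) := by
    intro B hB
    obtain ⟨hiB, hBne, hBsub⟩ := hblock B hB
    refine ⟨?_, ?_, ?_⟩
    · intro C hC
      rcases mem_insert.mp hC with rfl | hC
      · intro x hx
        rcases mem_insert.mp hx with rfl | hx
        · exact hiNR
        · exact hsub' (hBsub hx)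
      · exact ((hblock C (Finset.mem_of_mem_erase hC)).2.2).trans hsub'
    · intro h
      rcases mem_insert.mp h with h | h
      · exact absurd h.symm (Finset.insert_ne_empty i B)
      · exact hρ.2.1 (Finset.mem_of_mem_erase h)
    · intro x hx
      by_cases hxB : x ∈ insert i B
      · refine card_filter_one (mem_insert_self _ _) hxB ?_
        intro b hb hxb
        rcases mem_insert.mp hb with rfl | hb
        · rfl
        · exfalso
          have hbρ := Finset.mem_of_mem_erase hb
          rcases mem_insert.mp hxB with rfl | hxB'
          · exact (hblock b hbρ).1 hxb
          · exact (Finset.mem_erase.mp hb).1 (blocks_eq hρ hbρ hB hxb hxB')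
      · have hxi : x ≠ i := fun e => hxB (e ▸ mem_insert_self i B)
        have hx' : x ∈ (N.erase i) \ R := by
          rw [mem_sdiff] at hx ⊢
          exact ⟨Finset.mem_erase.mpr ⟨hxi, hx.1⟩, hx.2⟩
        obtain ⟨hb1, hb2⟩ := blockOf_spec hρ hx'
        have hbB : blockOf ρ x ≠ B := fun e => hxB (mem_insert_of_mem (e ▸ hb2))
        refine card_filter_one
          (mem_insert_of_mem (Finset.mem_erase.mpr ⟨hbB, hb1⟩)) hb2 ?_
        intro b hb hxb
        rcases mem_insert.mp hb with rfl | hb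
        · exact absurd hxb hxB
        · exact blocks_eq hρ (Finset.mem_of_mem_erase hb) hb1 hxb hb2
  have hnotmem : insert {i} ρ ∉ ρ.image (fun B => addToBlock ρ i B) := by
    rw [mem_image]
    rintro ⟨B, hB, hEq⟩
    obtain ⟨hiB, hBne, _⟩ := hblock B hB
    have h1' : ({i} : Finset ℕ) ∈ addToBlock ρ i B := by
      rw [hEq]; exact mem_insert_self _ _
    rcases mem_insert.mp h1' with h | h
    · obtain ⟨y, hy⟩ := hBne
      have hy' : y ∈ ({i} : Finset ℕ) := by rw [h]; exact mem_insert_of_mem hy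
      exact hiB ((mem_singleton.mp hy') ▸ hy)
    · exact (hblock _ (Finset.mem_of_mem_erase h)).1 (mem_singleton_self i)
  have hinj : ∀ B ∈ ρ, ∀ B' ∈ ρ, addToBlock ρ i B = addToBlock ρ i B' → B = B' := by
    intro B hB B' hB' hEq
    have h1' : insert i B ∈ addToBlock ρ i B' := by
      rw [← hEq]; exact mem_insert_self _ _
    rcases mem_insert.mp h1' with h | h
    · have hiB := (hblock B hB).1
      have hiB' := (hblock B' hB').1
      ext x
      constructor
      · intro hx
        have : x ∈ insert i B' := by rw [← h]; exact mem_insert_of_mem hx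
        rcases mem_insert.mp this with rfl | hx'
        · exact absurd hx hiB
        · exact hx'
      · intro hx
        have : x ∈ insert i B := by rw [h]; exact mem_insert_of_mem hx
        rcases mem_insert.mp this with rfl | hx'
        · exact absurd hx hiB'
        · exact hx'
    · exact absurd (mem_insert_self i B)
        (fun hh => (hblock _ (Finset.mem_of_mem_erase h)).1 hh)
  have hset : (partitionsOf (N \ R)).filter (fun τ => partRemove τ {i} = ρ)
      = insert (insert {i} ρ) (ρ.image (fun B => addToBlock ρ i B)) := by
    ext τ
    simp only [mem_filter, mem_partitionsOf, mem_insert, mem_image]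
    constructor
    · rintro ⟨hτ, hτρ⟩
      obtain ⟨hB₀1, hB₀2⟩ := blockOf_spec hτ hiNR
      set B₀ := blockOf τ i with hB₀def
      have hothers : ∀ C ∈ τ.erase B₀, i ∉ C := by
        intro C hC hiC
        exact (mem_erase.mp hC).1 (blocks_eq hτ (Finset.mem_of_mem_erase hC) hB₀1 hiC hB₀2)
      have himgτ : τ.image (fun B => B \ {i}) = insert (B₀ \ {i}) ((τ.erase B₀).image (fun B => B \ {i})) := by
        conv_lhs => rw [← Finset.insert_erase hB₀1]
        rw [Finset.image_insert]
      rw [himg _ hothers] at himgτ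
      have hB₀i : B₀ \ {i} ∉ τ.erase B₀ := by
        intro h
        rcases Finset.eq_empty_or_nonempty (B₀ \ {i}) with he | ⟨y, hy⟩
        · exact hτ.2.1 (Finset.mem_of_mem_erase (he ▸ h))
        · have heq := blocks_eq hτ (Finset.mem_of_mem_erase h) hB₀1 hy (mem_sdiff.mp hy).1
          rw [heq] at h
          exact (mem_erase.mp h).1 rfl
      by_cases hB₀s : B₀ = {i}
      · left
        have hPR : partRemove τ {i} = τ.erase B₀ := by
          rw [partRemove, himgτ, hB₀s, sdiff_self, Finset.bot_eq_empty, Finset.erase_insert_eq_erase,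
            Finset.erase_eq_of_notMem (fun h => hτ.2.1 (Finset.mem_of_mem_erase h))]
        rw [← hτρ, hPR, ← hB₀s, Finset.insert_erase hB₀1]
      · right
        have hne : B₀ \ {i} ≠ ∅ := by
          intro h
          apply hB₀s
          ext x
          simp only [mem_singleton]
          constructor
          · intro hx
            by_contra hxi
            have hmem : x ∈ B₀ \ {i} := mem_sdiff.mpr ⟨hx, by simpa using hxi⟩
            simp [h] at hmem
          · rintro rfl; exact hB₀2
        have hPR : partRemove τ {i} = insert (B₀ \ {i}) (τ.erase B₀) := by
          rw [partRemove, himgτ]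
          apply Finset.erase_eq_of_notMem
          intro h
          rcases mem_insert.mp h with h | h
          · exact hne h.symm
          · exact hτ.2.1 (Finset.mem_of_mem_erase h)
        refine ⟨B₀ \ {i}, ?_, ?_⟩
        · rw [← hτρ, hPR]; exact mem_insert_self _ _
        · have hiB : insert i (B₀ \ {i}) = B₀ := by
            ext x
            simp only [mem_insert, mem_sdiff, mem_singleton]
            constructor
            · rintro (rfl | ⟨hh, _⟩)
              · exact hB₀2
              · exact hh
            · intro hh
              by_cases hxi : x = i
              · exact Or.inl hxi
              · exact Or.inr ⟨hh, hxi⟩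
          have herase : ρ.erase (B₀ \ {i}) = τ.erase B₀ := by
            rw [← hτρ, hPR, Finset.erase_insert hB₀i]
          rw [addToBlock, hiB, herase, Finset.insert_erase hB₀1]
    · rintro (rfl | ⟨B, hB, rfl⟩)
      · exact ⟨hp1, h1⟩
      · exact ⟨hp2 B hB, h2 B hB⟩
  -- cardinalities
  have hcard : (N \ R).card = ((N.erase i) \ R).card + 1 := by
    rw [← hE, Finset.card_erase_of_mem hiNR]
    have : 1 ≤ (N \ R).card := Finset.card_pos.mpr ⟨i, hiNR⟩
    omega
  set k := ((N.erase i) \ R).card with hk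
  have hP : (0:ℝ) < ∏ B ∈ ρ, ((B.card - 1).factorial : ℝ) :=
    Finset.prod_pos fun B _ => by exact_mod_cast Nat.factorial_pos _
  have hkf : (0:ℝ) < (k.factorial : ℝ) := by exact_mod_cast Nat.factorial_pos _
  have hk1 : (0:ℝ) < (k:ℝ) + 1 := by positivity
  have hcoef1 : pstar (N \ R) (insert {i} ρ) / pstar ((N.erase i) \ R) ρ
      = ((k : ℝ) + 1)⁻¹ := by
    unfold pstar
    rw [Finset.prod_insert hsing, hcard, Nat.factorial_succ]
    simp only [Finset.card_singleton]
    norm_num [Nat.factorial]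
    rw [← hk]
    field_simp
  have hcoef2 : ∀ B ∈ ρ, pstar (N \ R) (addToBlock ρ i B) / pstar ((N.erase i) \ R) ρ
      = (B.card : ℝ) / ((k:ℝ) + 1) := by
    intro B hB
    obtain ⟨hiB, hBne, _⟩ := hblock B hB
    have hiBmem : insert i B ∉ ρ.erase B :=
      fun h => (hblock _ (Finset.mem_of_mem_erase h)).1 (mem_insert_self i B)
    have hc : B.card = (B.card - 1) + 1 :=
      (Nat.succ_pred_eq_of_pos (Finset.card_pos.mpr hBne)).symm
    have hfact : (B.card.factorial : ℝ) = (B.card : ℝ) * ((B.card - 1).factorial : ℝ) := by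
      conv_lhs => rw [hc]
      rw [Nat.factorial_succ, ← hc]
      push_cast
      ring
    have hprod : ∏ C ∈ addToBlock ρ i B, ((C.card - 1).factorial : ℝ)
        = (B.card : ℝ) * ∏ C ∈ ρ, ((C.card - 1).factorial : ℝ) := by
      rw [addToBlock, Finset.prod_insert hiBmem,
        ← Finset.mul_prod_erase ρ _ hB, Finset.card_insert_of_notMem hiB,
        Nat.add_sub_cancel, hfact]
      ring
    unfold pstar
    rw [hprod, hcard, Nat.factorial_succ, ← hk]
    push_cast
    rw [div_div_eq_mul_div, div_mul_eq_mul_div, div_div, div_eq_div_iff (mul_pos (mul_pos hk1 hkf) hP).ne' hk1.ne']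
    ring
  -- sum over blocks
  have hdisj : (ρ : Set (Finset ℕ)).PairwiseDisjoint id := by
    intro B hB B' hB' hne
    simp only [Function.onFun, id]
    rw [Finset.disjoint_left]
    intro x hx hx'
    exact hne (blocks_eq hρ hB hB' hx hx')
  have hjs : ∑ j ∈ (N \ R).erase i, w R (addToBlock ρ i (blockOf ρ j))
      = ∑ B ∈ ρ, (B.card : ℝ) * w R (addToBlock ρ i B) := by
    rw [hE, ← biUnion_eq hρ, Finset.sum_biUnion hdisj]
    refine Finset.sum_congr rfl fun B hB => ?_
    have hBeq : ∀ j ∈ B, blockOf ρ j = B := by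
      intro j hj
      have hjM : j ∈ (N.erase i) \ R := (hblock B hB).2.2 hj
      exact blocks_eq hρ (blockOf_spec hρ hjM).1 hB (blockOf_spec hρ hjM).2 hj
    calc ∑ j ∈ id B, w R (addToBlock ρ i (blockOf ρ j))
        = ∑ _j ∈ B, w R (addToBlock ρ i B) :=
          Finset.sum_congr rfl fun j hj => by rw [hBeq j hj]
      _ = (B.card : ℝ) * w R (addToBlock ρ i B) := by
          rw [Finset.sum_const, nsmul_eq_mul]
  have hNRcast : ((N.card : ℝ) - (R.card : ℝ)) = ((k : ℝ) + 1) := by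
    have h1' : R.card ≤ N.card := Finset.card_le_card hR
    have h2' : (N \ R).card = N.card - R.card := Finset.card_sdiff_of_subset hR
    have h3 : N.card = k + 1 + R.card := by omega
    rw [h3]
    push_cast
    ring
  rw [hset, Finset.sum_insert hnotmem,
    Finset.sum_image (fun B hB B' hB' => hinj B hB B' hB'), hcoef1]
  have hRHS : ∀ B ∈ ρ, (pstar (N \ R) (addToBlock ρ i B) / pstar ((N.erase i) \ R) ρ)
      * w R (addToBlock ρ i B) = ((k:ℝ)+1)⁻¹ * ((B.card : ℝ) * w R (addToBlock ρ i B)) := by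
    intro B hB
    rw [hcoef2 B hB]
    field_simp
  rw [Finset.sum_congr rfl hRHS, restrict1]
  rw [hNRcast, hjs, ← Finset.mul_sum]
  ring

lemma restrictL_formula : ∀ (l : List ℕ) (N : Finset ℕ) (w : Game),
    l.Nodup → (∀ i ∈ l, i ∈ N) →
    ∀ R ⊆ N \ l.toFinset, ∀ ρ, IsPartition ((N \ l.toFinset) \ R) ρ →
    restrictL N w l R ρ
      = ∑ τ ∈ (partitionsOf (N \ R)).filter (fun τ => partRemove τ l.toFinset = ρ),
          (pstar (N \ R) τ / pstar ((N \ l.toFinset) \ R) ρ) * w R τ := by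
  intro l
  induction l with
  | nil =>
    intro N w _ _ R hR ρ hρ
    simp only [List.toFinset_nil, Finset.sdiff_empty] at hρ hR ⊢
    have hfil : (partitionsOf (N \ R)).filter (fun τ => partRemove τ ∅ = ρ) = {ρ} := by
      ext τ
      simp only [mem_filter, mem_singleton, mem_partitionsOf]
      constructor
      · rintro ⟨hτ, hτρ⟩
        rw [← hτρ, partRemove_empty hτ.2.1]
      · rintro rfl
        exact ⟨hρ, partRemove_empty hρ.2.1⟩
    rw [restrictL]
    have := Finset.sum_congr hfil (fun τ _ => rfl) (f := fun τ => pstar (N \ R) τ / pstar (N \ R) ρ * w R τ)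
    rw [Finset.sum_singleton, div_self (ne_of_gt (pstar_pos _ _)), one_mul] at this
    exact this.symm
  | cons i l ih =>
    intro N w hnd hmem R hR ρ hρ
    have hiN : i ∈ N := hmem i (List.mem_cons_self)
    have hNS : N \ (i :: l).toFinset = (N.erase i) \ l.toFinset := by
      ext x
      simp only [List.toFinset_cons, mem_sdiff, mem_insert, mem_erase]
      tauto
    rw [hNS] at hR hρ ⊢
    have hndl : l.Nodup := (List.nodup_cons.mp hnd).2
    have hil : i ∉ l := (List.nodup_cons.mp hnd).1
    have hmem' : ∀ j ∈ l, j ∈ N.erase i := fun j hj =>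
      Finset.mem_erase.mpr ⟨fun e => hil (e ▸ hj), hmem j (List.mem_cons_of_mem i hj)⟩
    have hiR : i ∉ R := by
      intro h
      have h' := hR h
      rw [mem_sdiff, mem_erase] at h'
      exact h'.1.1 rfl
    have hRN : R ⊆ N := fun x hx =>
      Finset.mem_of_mem_erase ((mem_sdiff.mp (hR hx)).1)
    rw [restrictL, ih (N.erase i) (restrict1 N w i) hndl hmem' R hR ρ hρ]
    have hstep : ∀ σ ∈ (partitionsOf ((N.erase i) \ R)).filter
        (fun σ => partRemove σ l.toFinset = ρ),
        (pstar ((N.erase i) \ R) σ / pstar (((N.erase i) \ l.toFinset) \ R) ρ)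
            * restrict1 N w i R σ
          = ∑ τ ∈ (partitionsOf (N \ R)).filter (fun τ => partRemove τ {i} = σ),
              (pstar (N \ R) τ / pstar (((N.erase i) \ l.toFinset) \ R) ρ) * w R τ := by
      intro σ hσ
      rw [mem_filter, mem_partitionsOf] at hσ
      rw [restrict1_formula N w i hiN R hRN hiR σ hσ.1, Finset.mul_sum]
      refine Finset.sum_congr rfl fun τ hτ => ?_
      have h0 : pstar ((N.erase i) \ R) σ ≠ 0 := ne_of_gt (pstar_pos _ _)
      have hd : pstar (((N.erase i) \ l.toFinset) \ R) ρ ≠ 0 := ne_of_gt (pstar_pos _ _)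
      field_simp
    rw [Finset.sum_congr rfl hstep,
      Finset.sum_fiberwise_eq_sum_filter (partitionsOf (N \ R))
        ((partitionsOf ((N.erase i) \ R)).filter (fun σ => partRemove σ l.toFinset = ρ))
        (fun τ => partRemove τ {i})
        (fun τ => (pstar (N \ R) τ / pstar (((N.erase i) \ l.toFinset) \ R) ρ) * w R τ)]
    congr 1
    apply Finset.filter_congr
    intro τ hτ
    rw [mem_partitionsOf] at hτ
    simp only [mem_filter, mem_partitionsOf, List.toFinset_cons]
    have hsd : (N \ R) \ {i} = (N.erase i) \ R := by
      ext x
      simp only [mem_sdiff, mem_erase, mem_singleton]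
      tauto
    have hins : ({i} ∪ l.toFinset : Finset ℕ) = insert i l.toFinset :=
      (Finset.insert_eq i l.toFinset).symm
    constructor
    · rintro ⟨_, h⟩
      rw [partRemove_partRemove, hins] at h
      exact h
    · intro h
      refine ⟨?_, ?_⟩
      · have hp := isPartition_partRemove hτ {i}
        rwa [hsd] at hp
      · rw [partRemove_partRemove, hins]
        exact h

end TUX
open TUX in
/-- Explicit formula for the restriction removing a coalition `S`:
`w₋S(R,ρ) = ∑_{τ ∈ Π(N∖R) : τ₋S = ρ} (p*_{N∖R}(τ)/p*_{(N∖S)∖R}(ρ)) w(R,τ)`. -/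
theorem restrictSet_formula (N : Finset ℕ) (w : Game) (hw : IsTUX w)
    (S : Finset ℕ) (hS : S ⊆ N) :
    ∀ R ⊆ N \ S, ∀ ρ, IsPartition ((N \ S) \ R) ρ →
      restrictSet N w S R ρ
        = ∑ τ ∈ (partitionsOf (N \ R)).filter (fun τ => partRemove τ S = ρ),
            (pstar (N \ R) τ / pstar ((N \ S) \ R) ρ) * w R τ := by
  intro R hR ρ hρ
  have hnd := Finset.sort_nodup S (· ≤ ·)
  have hmem : ∀ i ∈ S.sort (· ≤ ·), i ∈ N := fun i hi =>
    hS ((Finset.mem_sort _).mp hi)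
  have hts : (S.sort (· ≤ ·)).toFinset = S := Finset.sort_toFinset S _
  rw [restrictSet, restrictL_formula (S.sort (· ≤ ·)) N w hnd hmem R
    (by rw [hts]; exact hR) ρ (by rw [hts]; exact hρ), hts]
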